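/- Let S be a non-degenerate simplex in ℝᵏ with vertices x₁,…,x_{k+1}, and let q₁,…,q_{k+1} ∈ ℝᵏ be points with q_i ∈ conv{x_j : j ≠ i} for each i. If 0 ∈ conv{x₁,…,x_{k+1}}, then there exists a nonempty subset I ⊆ {1,…,k+1} such that 0 lies in the convex hull of {q_i : i ∈ I} ∪ {x_j : j ∉ I}. -/

import Mathlib

open Finset

namespace Stmt5

attribute [local instance] Classical.propDecidable

abbrev Col (n : ℕ) := Sum (Fin n) (Sum (Fin n) Unit)

variable {n : ℕ}

/-- the special column index -/
def z0 (n : ℕ) : Col n := Sum.inr (Sum.inr ())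

/-- the columns: rows of μ, unit vectors, all-ones vector -/
def vec (μ : Fin n → Fin n → ℝ) : Col n → (Fin n → ℝ)
  | Sum.inl i => fun j => μ i j
  | Sum.inr (Sum.inl j) => fun j' => if j' = j then 1 else 0
  | Sum.inr (Sum.inr _) => fun _ => 1

def Sol (μ : Fin n → Fin n → ℝ) (lam : Fin n → ℝ) (S : Finset (Col n)) : Set (Col n → ℝ) :=
  {x | (∀ c, 0 ≤ x c) ∧ (∀ c, c ∉ S → x c = 0) ∧ ∑ c, x c • vec μ c = lam}

def OK (S : Finset (Col n)) : Prop :=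
  ∀ i : Fin n, ¬(Sum.inl i ∈ S ∧ Sum.inr (Sum.inl i) ∈ S)

def Vert (μ : Fin n → Fin n → ℝ) (lam : Fin n → ℝ) (B : Finset (Col n)) : Prop :=
  B.card = n ∧ OK B ∧ (Sol μ lam B).Nonempty

def Eset (μ : Fin n → Fin n → ℝ) (lam : Fin n → ℝ) (C : Finset (Col n)) : Prop :=
  C.card = n + 1 ∧ OK C ∧ (Sol μ lam C).Nonempty

def Nondeg (μ : Fin n → Fin n → ℝ) (lam : Fin n → ℝ) : Prop :=
  ∀ T : Finset (Col n), T.card < n → lam ∉ Submodule.span ℝ (vec μ '' ↑T)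

lemma sol_mono {μ : Fin n → Fin n → ℝ} {lam : Fin n → ℝ} {S S' : Finset (Col n)}
    (h : S ⊆ S') : Sol μ lam S ⊆ Sol μ lam S' := by
  rintro x ⟨h1, h2, h3⟩
  exact ⟨h1, fun c hc => h2 c (fun hc' => hc (h hc')), h3⟩

lemma ok_mono {S S' : Finset (Col n)} (h : S ⊆ S') (hS' : OK S') : OK S := by
  intro i hi
  exact hS' i ⟨h hi.1, h hi.2⟩

lemma lam_mem_span_filter {μ : Fin n → Fin n → ℝ} {lam : Fin n → ℝ} {S : Finset (Col n)}
    {x : Col n → ℝ} (hx : x ∈ Sol μ lam S) :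
    lam ∈ Submodule.span ℝ (vec μ '' ↑(S.filter fun c => x c ≠ 0)) := by
  obtain ⟨-, h2, h3⟩ := hx
  have : ∑ c ∈ S.filter (fun c => x c ≠ 0), x c • vec μ c = lam := by
    rw [← h3]
    apply Finset.sum_subset (Finset.subset_univ _)
    intro c _ hc
    by_cases hcS : c ∈ S
    · have : ¬ x c ≠ 0 := by
        intro h; exact hc (Finset.mem_filter.2 ⟨hcS, h⟩)
      simp [not_not.1 this]
    · simp [h2 c hcS]
  rw [← this]
  apply Submodule.sum_mem
  intro c hc
  exact Submodule.smul_mem _ _ (Submodule.subset_span ⟨c, by simpa using hc, rfl⟩)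

lemma lam_mem_span {μ : Fin n → Fin n → ℝ} {lam : Fin n → ℝ} {S : Finset (Col n)}
    (hx : (Sol μ lam S).Nonempty) :
    lam ∈ Submodule.span ℝ (vec μ '' ↑S) := by
  obtain ⟨x, hx⟩ := hx
  refine Submodule.span_mono ?_ (lam_mem_span_filter hx)
  apply Set.image_mono
  intro c hc
  simp only [Finset.coe_filter, Set.mem_setOf_eq] at hc
  exact hc.1

lemma card_supp_ge {μ : Fin n → Fin n → ℝ} {lam : Fin n → ℝ} (hnd : Nondeg μ lam)
    {S : Finset (Col n)} {x : Col n → ℝ} (hx : x ∈ Sol μ lam S) :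
    n ≤ (S.filter fun c => x c ≠ 0).card := by
  by_contra h
  exact hnd _ (by omega) (lam_mem_span_filter hx)

/-- eliminate a column from a span using a dependency -/
lemma span_elim {μ : Fin n → Fin n → ℝ} {lam : Fin n → ℝ} {S : Finset (Col n)}
    (hlam : lam ∈ Submodule.span ℝ (vec μ '' ↑S)) (d : Col n → ℝ)
    (hd0 : ∑ c, d c • vec μ c = 0) (hsupp : ∀ c, c ∉ S → d c = 0)
    {c₀ : Col n} (hc₀ : d c₀ ≠ 0) :
    lam ∈ Submodule.span ℝ (vec μ '' ↑(S.erase c₀)) := by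
  have hc₀S : c₀ ∈ S := by
    by_contra h; exact hc₀ (hsupp c₀ h)
  have key : vec μ c₀ ∈ Submodule.span ℝ (vec μ '' ↑(S.erase c₀)) := by
    have hsplit : d c₀ • vec μ c₀ + ∑ c ∈ Finset.univ.erase c₀, d c • vec μ c = 0 := by
      exact (Finset.add_sum_erase Finset.univ (fun c => d c • vec μ c)
        (Finset.mem_univ c₀)).trans hd0
    have : vec μ c₀ = (-(d c₀)⁻¹) • ∑ c ∈ Finset.univ.erase c₀, d c • vec μ c := by
      have := eq_neg_of_add_eq_zero_left hsplit
      rw [neg_smul, ← smul_neg, ← this, inv_smul_smul₀ hc₀]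
    rw [this]
    apply Submodule.smul_mem
    apply Submodule.sum_mem
    intro c hc
    by_cases hcS : c ∈ S.erase c₀
    · exact Submodule.smul_mem _ _ (Submodule.subset_span ⟨c, Finset.mem_coe.2 hcS, rfl⟩)
    · have hcc₀ : c ≠ c₀ := (Finset.mem_erase.1 hc).1
      have : d c = 0 := by
        apply hsupp
        intro hcS'
        exact hcS (Finset.mem_erase.2 ⟨hcc₀, hcS'⟩)
      simp [this]
  have : Submodule.span ℝ (vec μ '' ↑S) ≤ Submodule.span ℝ (vec μ '' ↑(S.erase c₀)) := by
    rw [Submodule.span_le]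
    rintro v ⟨c, hcS, rfl⟩
    rcases eq_or_ne c c₀ with rfl | hne
    · exact key
    · exact Submodule.subset_span ⟨c, by simp only [Finset.coe_erase, Set.mem_diff,
        Finset.mem_coe, Set.mem_singleton_iff]; exact ⟨hcS, hne⟩, rfl⟩
  exact this hlam


lemma weight_pos {μ : Fin n → Fin n → ℝ} (hn : 0 < n) (hrow : ∀ i, ∑ j, μ i j = 1)
    (c : Col n) : 0 < ∑ j, vec μ c j := by
  match c with
  | Sum.inl i => rw [show ∑ j, vec μ (Sum.inl i) j = 1 from hrow i]; norm_num
  | Sum.inr (Sum.inl j) =>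
      have : ∑ j', vec μ (Sum.inr (Sum.inl j)) j' = 1 := by
        simp [vec]
      rw [this]; norm_num
  | Sum.inr (Sum.inr _) =>
      have : ∑ j', vec μ (Sum.inr (Sum.inr ())) j' = n := by
        simp [vec]
      rw [this]
      exact_mod_cast hn

lemma dep_neg {μ : Fin n → Fin n → ℝ} (hn : 0 < n) (hrow : ∀ i, ∑ j, μ i j = 1)
    {d : Col n → ℝ} (hd0 : ∑ c, d c • vec μ c = 0) {c₁ : Col n} (hc₁ : d c₁ ≠ 0) :
    ∃ c, d c < 0 := by
  by_contra h
  push_neg at h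
  have hsum : ∑ c, d c * (∑ j, vec μ c j) = 0 := by
    have := congrArg (fun v : Fin n → ℝ => ∑ j, v j) hd0
    simp only [Finset.sum_apply, Pi.smul_apply, smul_eq_mul, Pi.zero_apply,
      Finset.sum_const_zero] at this
    rw [← this, Finset.sum_comm]
    congr 1
    ext c
    rw [Finset.mul_sum]
  have hzero : ∀ c ∈ Finset.univ, d c * (∑ j, vec μ c j) = 0 :=
    (Finset.sum_eq_zero_iff_of_nonneg (fun c _ =>
      mul_nonneg (h c) (le_of_lt (weight_pos hn hrow c)))).1 hsum
  have := hzero c₁ (Finset.mem_univ c₁)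
  rcases mul_eq_zero.1 this with h' | h'
  · exact hc₁ h'
  · exact absurd h' (ne_of_gt (weight_pos hn hrow c₁))

lemma dep_signs {μ : Fin n → Fin n → ℝ} (hn : 0 < n) (hrow : ∀ i, ∑ j, μ i j = 1)
    {d : Col n → ℝ} (hd0 : ∑ c, d c • vec μ c = 0) {c₁ : Col n} (hc₁ : d c₁ ≠ 0) :
    (∃ c, d c < 0) ∧ (∃ c, 0 < d c) := by
  refine ⟨dep_neg hn hrow hd0 hc₁, ?_⟩
  have hd0' : ∑ c, (-d) c • vec μ c = 0 := by
    rw [← neg_eq_zero, ← Finset.sum_neg_distrib]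
    rw [← hd0]
    congr 1; ext c; simp
  obtain ⟨c, hc⟩ := dep_neg hn hrow hd0' (c₁ := c₁) (by simpa using hc₁)
  exact ⟨c, by simpa using hc⟩

lemma dep_exists {μ : Fin n → Fin n → ℝ} {C : Finset (Col n)} (hC : C.card = n + 1) :
    ∃ d : Col n → ℝ, (∃ c, d c ≠ 0) ∧ (∀ c, c ∉ C → d c = 0) ∧ ∑ c, d c • vec μ c = 0 := by
  have hnotli : ¬ LinearIndependent ℝ (fun c : ↥C => vec μ ↑c) := by
    intro hli
    have := hli.fintype_card_le_finrank
    rw [Module.finrank_fintype_fun_eq_card] at this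
    simp [hC] at this
  obtain ⟨g, hg0, c₁, hc₁⟩ := Fintype.not_linearIndependent_iff.1 hnotli
  classical
  refine ⟨fun c => if h : c ∈ C then g ⟨c, h⟩ else 0, ⟨c₁, by simp [c₁.2, hc₁]⟩, ?_, ?_⟩
  · intro c hc; simp [hc]
  · have h1 : (∑ c : Col n, (fun c => if h : c ∈ C then g ⟨c, h⟩ else 0) c • vec μ c)
        = ∑ c ∈ C, (fun c => if h : c ∈ C then g ⟨c, h⟩ else 0) c • vec μ c := by
      symm
      apply Finset.sum_subset (Finset.subset_univ _)
      intro c _ hc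
      simp [hc]
    rw [h1, ← Finset.sum_coe_sort C, ← hg0]
    congr 1
    ext c
    simp [c.2]

lemma vert_sol_unique {μ : Fin n → Fin n → ℝ} {lam : Fin n → ℝ} (hnd : Nondeg μ lam)
    (hn : 0 < n) {B : Finset (Col n)} (hB : B.card = n)
    {x y : Col n → ℝ} (hx : x ∈ Sol μ lam B) (hy : y ∈ Sol μ lam B) : x = y := by
  by_contra hne
  have : ∃ c₀, x c₀ - y c₀ ≠ 0 := by
    by_contra h
    push_neg at h
    exact hne (funext fun c => by linarith [sub_eq_zero.1 (h c)])
  obtain ⟨c₀, hc₀⟩ := this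
  have hd0 : ∑ c, (x c - y c) • vec μ c = 0 := by
    simp only [sub_smul, Finset.sum_sub_distrib, hx.2.2, hy.2.2, sub_self]
  have hsupp : ∀ c, c ∉ B → x c - y c = 0 := by
    intro c hc
    rw [hx.2.1 c hc, hy.2.1 c hc, sub_self]
  have hc₀B : c₀ ∈ B := by
    by_contra h
    exact hc₀ (hsupp c₀ h)
  have := span_elim (lam_mem_span ⟨x, hx⟩) _ hd0 hsupp hc₀
  exact hnd _ (by rw [Finset.card_erase_of_mem hc₀B, hB]; omega) this


/-- From a solution on C and a dependency with a negative coefficient,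
produce a vertex of the form `C.erase cm` with `d cm < 0`. -/
lemma endpoint {μ : Fin n → Fin n → ℝ} {lam : Fin n → ℝ} {C : Finset (Col n)}
    (hCcard : C.card = n + 1) (hCok : OK C)
    {x : Col n → ℝ} (hx : x ∈ Sol μ lam C)
    {d : Col n → ℝ} (hsupp : ∀ c, c ∉ C → d c = 0) (hd0 : ∑ c, d c • vec μ c = 0)
    (hneg : ∃ c, d c < 0) :
    ∃ cm, cm ∈ C ∧ d cm < 0 ∧ Vert μ lam (C.erase cm) := by
  classical
  set D := Finset.univ.filter (fun c => d c < 0) with hD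
  have hDne : D.Nonempty := by
    obtain ⟨c, hc⟩ := hneg
    exact ⟨c, by simp [hD, hc]⟩
  obtain ⟨cm, hcmD, hcmmin⟩ := Finset.exists_min_image D (fun c => x c / (-(d c))) hDne
  have hcmneg : d cm < 0 := by simpa [hD] using hcmD
  have hcmC : cm ∈ C := by
    by_contra h
    rw [hsupp cm h] at hcmneg; linarith
  set t := x cm / (-(d cm)) with ht
  have htpos : 0 ≤ t := div_nonneg (hx.1 cm) (by linarith)
  set u := fun c => x c + t * d c with hu
  have hu0 : ∀ c, 0 ≤ u c := by
    intro c
    rcases lt_or_ge (d c) 0 with hdc | hdc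
    · have hcD : c ∈ D := by simp [hD, hdc]
      have := hcmmin c hcD
      have h2 : t * (-(d c)) ≤ x c := (le_div_iff₀ (by linarith)).1 this
      simp only [hu]
      nlinarith
    · have := hx.1 c
      simp only [hu]
      nlinarith
  have hucm : u cm = 0 := by
    have hne : d cm ≠ 0 := ne_of_lt hcmneg
    simp only [hu, ht]
    rw [div_mul_eq_mul_div, mul_div_assoc, div_neg, div_self hne]
    ring
  refine ⟨cm, hcmC, hcmneg, ?_, ?_, ⟨u, hu0, ?_, ?_⟩⟩
  · rw [Finset.card_erase_of_mem hcmC, hCcard]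
    omega
  · exact ok_mono (Finset.erase_subset _ _) hCok
  · intro c hc
    rcases eq_or_ne c cm with rfl | hne
    · exact hucm
    · have hcC : c ∉ C := by
        intro h
        exact hc (Finset.mem_erase.2 ⟨hne, h⟩)
      simp only [hu, hx.2.1 c hcC, hsupp c hcC]
      ring
  · have hsum : ∑ c, u c • vec μ c = (∑ c, x c • vec μ c) + ∑ c, (t * d c) • vec μ c := by
      rw [← Finset.sum_add_distrib]
      apply Finset.sum_congr rfl
      intro c _
      rw [← add_smul]
    have hsum2 : ∑ c, (t * d c) • vec μ c = t • ∑ c, d c • vec μ c := by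
      rw [Finset.smul_sum]
      apply Finset.sum_congr rfl
      intro c _
      rw [smul_smul]
    rw [hsum, hsum2, hd0, smul_zero, add_zero, hx.2.2]

lemma eset_two {μ : Fin n → Fin n → ℝ} {lam : Fin n → ℝ} (hn : 0 < n)
    (hrow : ∀ i, ∑ j, μ i j = 1) (hnd : Nondeg μ lam) {C : Finset (Col n)}
    (hC : Eset μ lam C) :
    (C.filter fun c => Vert μ lam (C.erase c)).card = 2 := by
  classical
  obtain ⟨hCcard, hCok, ⟨x, hx⟩⟩ := hC
  -- lower bound
  obtain ⟨d, ⟨c₁, hc₁⟩, hdsupp, hd0⟩ := dep_exists (μ := μ) hCcard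
  obtain ⟨hex_neg, hex_pos⟩ := dep_signs hn hrow hd0 hc₁
  obtain ⟨cm, hcmC, hcmneg, hcmvert⟩ := endpoint hCcard hCok hx hdsupp hd0 hex_neg
  have hd0' : ∑ c, (-d) c • vec μ c = 0 := by
    have : ∑ c, (-d) c • vec μ c = -∑ c, d c • vec μ c := by
      rw [← Finset.sum_neg_distrib]
      congr 1; ext c; simp
    rw [this, hd0, neg_zero]
  obtain ⟨cp, hcpC, hcpneg, hcpvert⟩ := endpoint hCcard hCok hx
    (fun c hc => by simp [hdsupp c hc]) hd0'
    (by obtain ⟨c, hc⟩ := hex_pos; exact ⟨c, by simpa using hc⟩)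
  have hcmcp : cm ≠ cp := by
    intro h
    rw [h] at hcmneg
    simp only [Pi.neg_apply] at hcpneg
    linarith
  have hge : 1 < (C.filter fun c => Vert μ lam (C.erase c)).card := by
    rw [Finset.one_lt_card]
    exact ⟨cm, Finset.mem_filter.2 ⟨hcmC, hcmvert⟩, cp,
      Finset.mem_filter.2 ⟨hcpC, hcpvert⟩, hcmcp⟩
  -- upper bound
  have hle : ¬ 2 < (C.filter fun c => Vert μ lam (C.erase c)).card := by
    intro h
    rw [Finset.two_lt_card] at h
    obtain ⟨e₁, he₁, e₂, he₂, e₃, he₃, h12, h13, h23⟩ := h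
    rw [Finset.mem_filter] at he₁ he₂ he₃
    obtain ⟨x₁, hx₁⟩ := he₁.2.2.2
    obtain ⟨x₂, hx₂⟩ := he₂.2.2.2
    obtain ⟨x₃, hx₃⟩ := he₃.2.2.2
    have hx₁C : x₁ ∈ Sol μ lam C := sol_mono (Finset.erase_subset _ _) hx₁
    have hx₂C : x₂ ∈ Sol μ lam C := sol_mono (Finset.erase_subset _ _) hx₂
    have hx₃C : x₃ ∈ Sol μ lam C := sol_mono (Finset.erase_subset _ _) hx₃
    have hz₁ : x₁ e₁ = 0 := hx₁.2.1 _ (Finset.notMem_erase _ _)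
    have hz₂ : x₂ e₂ = 0 := hx₂.2.1 _ (Finset.notMem_erase _ _)
    have hz₃ : x₃ e₃ = 0 := hx₃.2.1 _ (Finset.notMem_erase _ _)
    -- each xᵢ is positive on C away from eᵢ
    have pos : ∀ (y : Col n → ℝ) (e : Col n), e ∈ C → y ∈ Sol μ lam C → y e = 0 →
        ∀ c ∈ C, c ≠ e → 0 < y c := by
      intro y e heC hy hye c hcC hce
      rcases (hy.1 c).lt_or_eq with h | h
      · exact h
      have hsub : (C.filter fun c' => y c' ≠ 0) ⊆ (C.erase e).erase c := by
        intro c' hc'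
        rw [Finset.mem_filter] at hc'
        refine Finset.mem_erase.2 ⟨?_, Finset.mem_erase.2 ⟨?_, hc'.1⟩⟩
        · rintro rfl; exact hc'.2 h.symm
        · rintro rfl; exact hc'.2 hye
      have hcard := Finset.card_le_card hsub
      rw [Finset.card_erase_of_mem (Finset.mem_erase.2 ⟨hce, hcC⟩),
        Finset.card_erase_of_mem heC, hCcard] at hcard
      have := card_supp_ge hnd hy
      omega
    have hp1 : ∀ c ∈ C, c ≠ e₁ → 0 < x₁ c := pos x₁ e₁ he₁.1 hx₁C hz₁
    have hp2 : ∀ c ∈ C, c ≠ e₂ → 0 < x₂ c := pos x₂ e₂ he₂.1 hx₂C hz₂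
    have hp3 : ∀ c ∈ C, c ≠ e₃ → 0 < x₃ c := pos x₃ e₃ he₃.1 hx₃C hz₃
    have h12sum : ∑ c, (x₁ c - x₂ c) • vec μ c = 0 := by
      simp only [sub_smul, Finset.sum_sub_distrib, hx₁C.2.2, hx₂C.2.2, sub_self]
    have h12supp : ∀ c, c ∉ C → x₁ c - x₂ c = 0 := by
      intro c hc
      rw [hx₁C.2.1 c hc, hx₂C.2.1 c hc, sub_self]
    by_cases hpar : ∃ ρ : ℝ, ∀ c, x₁ c - x₃ c = ρ * (x₁ c - x₂ c)
    · obtain ⟨ρ, hρ⟩ := hpar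
      rcases le_or_gt ρ 0 with hρ0 | hρ0
      · have h := hρ e₁
        have h2 := hp3 e₁ he₁.1 h13
        have h3 := hp2 e₁ he₁.1 h12
        rw [hz₁] at h
        nlinarith
      · rcases le_or_gt ρ 1 with hρ1 | hρ1
        · have h := hρ e₃
          have h2 := hp1 e₃ he₃.1 (Ne.symm h13)
          have h3 := hp2 e₃ he₃.1 (Ne.symm h23)
          rw [hz₃] at h
          nlinarith
        · have h := hρ e₂
          have h2 := hp1 e₂ he₂.1 (Ne.symm h12)
          have h3 := hx₃C.1 e₂
          rw [hz₂] at h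
          nlinarith
    · have he₂pos : x₁ e₂ - x₂ e₂ ≠ 0 := by
        rw [hz₂, sub_zero]
        exact ne_of_gt (hp1 e₂ he₂.1 (Ne.symm h12))
      set ρ := (x₁ e₂ - x₃ e₂) / (x₁ e₂ - x₂ e₂) with hρdef
      set k := fun c => (x₁ c - x₃ c) - ρ * (x₁ c - x₂ c) with hk
      have hke₂ : k e₂ = 0 := by
        simp only [hk, hρdef]
        field_simp
        ring
      have hkex : ∃ c₄, k c₄ ≠ 0 := by
        by_contra h
        push_neg at h
        exact hpar ⟨ρ, fun c => by have := h c; simp only [hk] at this; linarith⟩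
      obtain ⟨c₄, hc₄⟩ := hkex
      have hc₄C : c₄ ∈ C := by
        by_contra h
        apply hc₄
        simp only [hk, hx₁C.2.1 c₄ h, hx₂C.2.1 c₄ h, hx₃C.2.1 c₄ h]
        ring
      have hc₄e₂ : c₄ ≠ e₂ := by
        rintro rfl
        exact hc₄ hke₂
      have hksum : ∑ c, k c • vec μ c = 0 := by
        have h13sum : ∑ c, (x₁ c - x₃ c) • vec μ c = 0 := by
          simp only [sub_smul, Finset.sum_sub_distrib, hx₁C.2.2, hx₃C.2.2, sub_self]
        have : ∑ c, k c • vec μ c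
            = (∑ c, (x₁ c - x₃ c) • vec μ c) - ρ • ∑ c, (x₁ c - x₂ c) • vec μ c := by
          rw [Finset.smul_sum, ← Finset.sum_sub_distrib]
          apply Finset.sum_congr rfl
          intro c _
          simp only [hk, sub_smul, smul_smul, smul_sub]
          module
        rw [this, h13sum, h12sum, smul_zero, sub_zero]
      have step1 : lam ∈ Submodule.span ℝ (vec μ '' ↑(C.erase e₂)) :=
        span_elim (lam_mem_span ⟨x₁, hx₁C⟩) _ h12sum h12supp he₂pos
      have hksupp : ∀ c, c ∉ C.erase e₂ → k c = 0 := by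
        intro c hc
        rcases eq_or_ne c e₂ with rfl | hne
        · exact hke₂
        · have hcC : c ∉ C := fun h => hc (Finset.mem_erase.2 ⟨hne, h⟩)
          simp only [hk, hx₁C.2.1 c hcC, hx₂C.2.1 c hcC, hx₃C.2.1 c hcC]
          ring
      have step2 : lam ∈ Submodule.span ℝ (vec μ '' ↑((C.erase e₂).erase c₄)) :=
        span_elim step1 _ hksum hksupp hc₄
      apply hnd _ _ step2
      rw [Finset.card_erase_of_mem (Finset.mem_erase.2 ⟨hc₄e₂, hc₄C⟩),
        Finset.card_erase_of_mem he₂.1, hCcard]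
      omega
  omega


/-- structure of a basis without the special column: every pair is hit -/
lemma terminal_structure {B : Finset (Col n)} (hcard : B.card = n) (hok : OK B)
    (hz : z0 n ∉ B) : ∀ i : Fin n, Sum.inl i ∈ B ∨ Sum.inr (Sum.inl i) ∈ B := by
  classical
  set B₁ := (Finset.univ : Finset (Fin n)).filter (fun i => Sum.inl i ∈ B) with hB₁
  set B₂ := (Finset.univ : Finset (Fin n)).filter (fun i => Sum.inr (Sum.inl i) ∈ B) with hB₂
  have hBeq : B = B₁.image (fun i => (Sum.inl i : Col n)) ∪ B₂.image (fun j => (Sum.inr (Sum.inl j) : Col n)) := by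
    ext c
    constructor
    · intro hc
      match c with
      | Sum.inl i => exact Finset.mem_union_left _ (Finset.mem_image.2 ⟨i, by simp [hB₁, hc], rfl⟩)
      | Sum.inr (Sum.inl j) =>
          exact Finset.mem_union_right _ (Finset.mem_image.2 ⟨j, by simp [hB₂, hc], rfl⟩)
      | Sum.inr (Sum.inr ()) => exact absurd hc hz
    · intro hc
      rcases Finset.mem_union.1 hc with h | h <;>
      · obtain ⟨i, hi, rfl⟩ := Finset.mem_image.1 h
        simp only [hB₁, hB₂, Finset.mem_filter] at hi
        exact hi.2
  have hdisj : Disjoint (B₁.image (fun i => (Sum.inl i : Col n))) (B₂.image (fun j => (Sum.inr (Sum.inl j) : Col n))) := by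
    rw [Finset.disjoint_left]
    rintro c hc1 hc2
    obtain ⟨i, _, rfl⟩ := Finset.mem_image.1 hc1
    obtain ⟨j, _, h⟩ := Finset.mem_image.1 hc2
    exact absurd h (by simp)
  have hinj1 : (B₁.image (fun i => (Sum.inl i : Col n))).card = B₁.card :=
    Finset.card_image_of_injective _ (fun a b h => by simpa using h)
  have hinj2 : (B₂.image (fun j => (Sum.inr (Sum.inl j) : Col n))).card = B₂.card :=
    Finset.card_image_of_injective _ (fun a b h => by simpa using h)
  have hcards : B₁.card + B₂.card = n := by
    rw [← hinj1, ← hinj2, ← Finset.card_union_of_disjoint hdisj, ← hBeq, hcard]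
  have hdisj12 : Disjoint B₁ B₂ := by
    rw [Finset.disjoint_left]
    intro i hi1 hi2
    simp only [hB₁, hB₂, Finset.mem_filter] at hi1 hi2
    exact hok i ⟨hi1.2, hi2.2⟩
  have huniv : B₁ ∪ B₂ = Finset.univ := by
    apply Finset.eq_univ_of_card
    rw [Finset.card_union_of_disjoint hdisj12, hcards, Fintype.card_fin]
  intro i
  have : i ∈ B₁ ∪ B₂ := huniv ▸ Finset.mem_univ i
  rcases Finset.mem_union.1 this with h | h
  · exact Or.inl (by simpa [hB₁] using h)
  · exact Or.inr (by simpa [hB₂] using h)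

/-- structure of a basis with the special column: exactly one missed pair -/
lemma zvert_structure {B : Finset (Col n)} (hcard : B.card = n) (hok : OK B)
    (hz : z0 n ∈ B) :
    ∃ i₀ : Fin n, (Sum.inl i₀ ∉ B ∧ Sum.inr (Sum.inl i₀) ∉ B) ∧
      ∀ i : Fin n, i ≠ i₀ → Sum.inl i ∈ B ∨ Sum.inr (Sum.inl i) ∈ B := by
  classical
  set B₁ := (Finset.univ : Finset (Fin n)).filter (fun i => Sum.inl i ∈ B) with hB₁
  set B₂ := (Finset.univ : Finset (Fin n)).filter (fun i => Sum.inr (Sum.inl i) ∈ B) with hB₂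
  have hBeq : B = insert (z0 n) (B₁.image (fun i => (Sum.inl i : Col n)) ∪ B₂.image (fun j => (Sum.inr (Sum.inl j) : Col n))) := by
    ext c
    constructor
    · intro hc
      match c with
      | Sum.inl i => exact Finset.mem_insert_of_mem (Finset.mem_union_left _
          (Finset.mem_image.2 ⟨i, by simp [hB₁, hc], rfl⟩))
      | Sum.inr (Sum.inl j) => exact Finset.mem_insert_of_mem (Finset.mem_union_right _
          (Finset.mem_image.2 ⟨j, by simp [hB₂, hc], rfl⟩))
      | Sum.inr (Sum.inr ()) => exact Finset.mem_insert_self _ _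
    · intro hc
      rcases Finset.mem_insert.1 hc with rfl | hc
      · exact hz
      rcases Finset.mem_union.1 hc with h | h <;>
      · obtain ⟨i, hi, rfl⟩ := Finset.mem_image.1 h
        simp only [hB₁, hB₂, Finset.mem_filter] at hi
        exact hi.2
  have hdisj : Disjoint (B₁.image (fun i => (Sum.inl i : Col n))) (B₂.image (fun j => (Sum.inr (Sum.inl j) : Col n))) := by
    rw [Finset.disjoint_left]
    rintro c hc1 hc2
    obtain ⟨i, _, rfl⟩ := Finset.mem_image.1 hc1
    obtain ⟨j, _, h⟩ := Finset.mem_image.1 hc2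
    exact absurd h (by simp)
  have hznot : z0 n ∉ B₁.image (fun i => (Sum.inl i : Col n)) ∪ B₂.image (fun j => (Sum.inr (Sum.inl j) : Col n)) := by
    intro h
    rcases Finset.mem_union.1 h with h | h <;>
    · obtain ⟨i, _, h'⟩ := Finset.mem_image.1 h
      exact absurd h' (by simp [z0])
  have hcards : B₁.card + B₂.card + 1 = n := by
    have := Finset.card_insert_of_notMem hznot
    rw [← hBeq, hcard] at this
    rw [Finset.card_union_of_disjoint hdisj,
      Finset.card_image_of_injective _ (fun a b h => by simpa using h),
      Finset.card_image_of_injective _ (fun a b h => by simpa using h)] at this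
    omega
  have hdisj12 : Disjoint B₁ B₂ := by
    rw [Finset.disjoint_left]
    intro i hi1 hi2
    simp only [hB₁, hB₂, Finset.mem_filter] at hi1 hi2
    exact hok i ⟨hi1.2, hi2.2⟩
  have hcompl : ((B₁ ∪ B₂)ᶜ : Finset (Fin n)).card = 1 := by
    rw [Finset.card_compl, Finset.card_union_of_disjoint hdisj12, Fintype.card_fin]
    omega
  obtain ⟨i₀, hi₀⟩ := Finset.card_eq_one.1 hcompl
  refine ⟨i₀, ?_, ?_⟩
  · have : i₀ ∈ (B₁ ∪ B₂)ᶜ := hi₀ ▸ Finset.mem_singleton_self i₀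
    rw [Finset.mem_compl, Finset.mem_union] at this
    push_neg at this
    constructor
    · intro h; exact this.1 (by simp [hB₁, h])
    · intro h; exact this.2 (by simp [hB₂, h])
  · intro i hi
    have : i ∉ (B₁ ∪ B₂)ᶜ := by
      rw [hi₀, Finset.mem_singleton]; exact hi
    rw [Finset.mem_compl, not_not, Finset.mem_union] at this
    rcases this with h | h
    · exact Or.inl (by simpa [hB₁] using h)
    · exact Or.inr (by simpa [hB₂] using h)


/-- admissible extensions of a basis -/
noncomputable def ext (B : Finset (Col n)) : Finset (Col n) :=
  Finset.univ.filter (fun c => c ∉ B ∧ OK (insert c B))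

lemma ext_terminal {B : Finset (Col n)} (hcard : B.card = n) (hok : OK B)
    (hz : z0 n ∉ B) : ext B = {z0 n} := by
  classical
  ext c
  simp only [ext, Finset.mem_filter, Finset.mem_univ, true_and, Finset.mem_singleton]
  constructor
  · rintro ⟨hcB, hokins⟩
    match c with
    | Sum.inl i =>
        rcases terminal_structure hcard hok hz i with h | h
        · exact absurd h hcB
        · exact absurd ⟨Finset.mem_insert_self _ _, Finset.mem_insert_of_mem h⟩ (hokins i)
    | Sum.inr (Sum.inl j) =>
        rcases terminal_structure hcard hok hz j with h | h
        · exact absurd ⟨Finset.mem_insert_of_mem h, Finset.mem_insert_self _ _⟩ (hokins j)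
        · exact absurd h hcB
    | Sum.inr (Sum.inr ()) => rfl
  · rintro rfl
    refine ⟨hz, fun i hi => hok i ⟨?_, ?_⟩⟩
    · rcases Finset.mem_insert.1 hi.1 with h | h
      · exact absurd h (by simp [z0])
      · exact h
    · rcases Finset.mem_insert.1 hi.2 with h | h
      · exact absurd h (by simp [z0])
      · exact h

lemma ext_zvert {B : Finset (Col n)} (hcard : B.card = n) (hok : OK B)
    (hz : z0 n ∈ B) :
    ∃ i₀ : Fin n, ext B = {Sum.inl i₀, Sum.inr (Sum.inl i₀)} := by
  classical
  obtain ⟨i₀, ⟨h1, h2⟩, hrest⟩ := zvert_structure hcard hok hz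
  refine ⟨i₀, ?_⟩
  ext c
  simp only [ext, Finset.mem_filter, Finset.mem_univ, true_and, Finset.mem_insert,
    Finset.mem_singleton]
  constructor
  · rintro ⟨hcB, hokins⟩
    match c with
    | Sum.inl i =>
        rcases eq_or_ne i i₀ with rfl | hne
        · exact Or.inl rfl
        rcases hrest i hne with h | h
        · exact absurd h hcB
        · exact absurd ⟨Finset.mem_insert_self _ _, Finset.mem_insert_of_mem h⟩ (hokins i)
    | Sum.inr (Sum.inl j) =>
        rcases eq_or_ne j i₀ with rfl | hne
        · exact Or.inr rfl
        rcases hrest j hne with h | h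
        · exact absurd ⟨Finset.mem_insert_of_mem h, Finset.mem_insert_self _ _⟩ (hokins j)
        · exact absurd h hcB
    | Sum.inr (Sum.inr ()) => exact absurd hz hcB
  · rintro (rfl | rfl)
    · refine ⟨h1, fun i hi => ?_⟩
      rcases Finset.mem_insert.1 hi.2 with h | h
      · exact absurd h (by simp)
      rcases Finset.mem_insert.1 hi.1 with h' | h'
      · obtain rfl : i = i₀ := by simpa using h'
        exact h2 h
      · exact hok i ⟨h', h⟩
    · refine ⟨h2, fun i hi => ?_⟩
      rcases Finset.mem_insert.1 hi.1 with h | h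
      · exact absurd h (by simp)
      rcases Finset.mem_insert.1 hi.2 with h' | h'
      · obtain rfl : i = i₀ := by simpa using h'
        exact h1 h
      · exact hok i ⟨h, h'⟩

lemma ext_card {μ : Fin n → Fin n → ℝ} {lam : Fin n → ℝ} {B : Finset (Col n)}
    (hB : Vert μ lam B) :
    (ext B).card = if z0 n ∈ B then 2 else 1 := by
  obtain ⟨hcard, hok, -⟩ := hB
  split_ifs with hz
  · obtain ⟨i₀, h⟩ := ext_zvert hcard hok hz
    rw [h]
    rw [Finset.card_insert_of_notMem (by simp), Finset.card_singleton]
  · rw [ext_terminal hcard hok hz, Finset.card_singleton]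

/-- The handshake identity -/
lemma handshake (μ : Fin n → Fin n → ℝ) (lam : Fin n → ℝ) :
    ∑ B ∈ Finset.univ.filter (Vert μ lam), (ext B).card
      = ∑ C ∈ Finset.univ.filter (Eset μ lam),
          (C.filter (fun c => Vert μ lam (C.erase c))).card := by
  classical
  rw [← Finset.card_sigma, ← Finset.card_sigma]
  apply Finset.card_bij' (fun p _ => (⟨insert p.2 p.1, p.2⟩ : (_ : Finset (Col n)) × Col n))
    (fun p _ => (⟨p.1.erase p.2, p.2⟩ : (_ : Finset (Col n)) × Col n))
  · rintro ⟨B, c⟩ hp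
    rw [Finset.mem_sigma, Finset.mem_filter] at hp
    obtain ⟨⟨-, hvert⟩, hext⟩ := hp
    simp only [ext, Finset.mem_filter, Finset.mem_univ, true_and] at hext
    rw [Finset.mem_sigma, Finset.mem_filter]
    refine ⟨⟨Finset.mem_univ _, ?_, ?_, ?_⟩, ?_⟩
    · rw [Finset.card_insert_of_notMem hext.1, hvert.1]
    · exact hext.2
    · exact hvert.2.2.mono (sol_mono (Finset.subset_insert _ _))
    · rw [Finset.mem_filter]
      refine ⟨Finset.mem_insert_self _ _, ?_⟩
      rw [Finset.erase_insert hext.1]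
      exact hvert
  · rintro ⟨C, c⟩ hp
    rw [Finset.mem_sigma, Finset.mem_filter] at hp
    obtain ⟨⟨-, heset⟩, hfil⟩ := hp
    rw [Finset.mem_filter] at hfil
    rw [Finset.mem_sigma, Finset.mem_filter]
    refine ⟨⟨Finset.mem_univ _, hfil.2⟩, ?_⟩
    simp only [ext, Finset.mem_filter, Finset.mem_univ, true_and]
    refine ⟨Finset.notMem_erase _ _, ?_⟩
    rw [Finset.insert_erase hfil.1]
    exact heset.2.1
  · rintro ⟨B, c⟩ hp
    rw [Finset.mem_sigma, Finset.mem_filter] at hp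
    simp only [ext, Finset.mem_filter, Finset.mem_univ, true_and] at hp
    rw [Sigma.mk.inj_iff]
    exact ⟨by rw [Finset.erase_insert hp.2.1], HEq.rfl⟩
  · rintro ⟨C, c⟩ hp
    rw [Finset.mem_sigma, Finset.mem_filter] at hp
    obtain ⟨-, hfil⟩ := hp
    rw [Finset.mem_filter] at hfil
    rw [Sigma.mk.inj_iff]
    exact ⟨by rw [Finset.insert_erase hfil.1], HEq.rfl⟩


/-- the trivial basis of unit vectors -/
noncomputable def B0 (n : ℕ) : Finset (Col n) :=
  (Finset.univ : Finset (Fin n)).image (fun j => (Sum.inr (Sum.inl j) : Col n))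

lemma B0_vert {μ : Fin n → Fin n → ℝ} {lam : Fin n → ℝ} (hlam : ∀ j, 0 ≤ lam j) :
    Vert μ lam (B0 n) := by
  classical
  refine ⟨?_, ?_, ?_⟩
  · rw [B0, Finset.card_image_of_injective _ (fun a b h => by simpa using h),
      Finset.card_univ, Fintype.card_fin]
  · intro i hi
    obtain ⟨j, -, h⟩ := Finset.mem_image.1 hi.1
    exact absurd h (by simp)
  · refine ⟨fun c => match c with
      | Sum.inr (Sum.inl j) => lam j
      | _ => 0, fun c => ?_, fun c hc => ?_, ?_⟩
    · match c with
      | Sum.inl i => exact le_refl 0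
      | Sum.inr (Sum.inl j) => exact hlam j
      | Sum.inr (Sum.inr ()) => exact le_refl 0
    · match c with
      | Sum.inl i => rfl
      | Sum.inr (Sum.inl j) => exact absurd (Finset.mem_image.2 ⟨j, Finset.mem_univ j, rfl⟩) hc
      | Sum.inr (Sum.inr ()) => rfl
    · rw [Fintype.sum_sum_type]
      simp only [zero_smul, Finset.sum_const_zero, zero_add]
      rw [Fintype.sum_sum_type]
      simp only [Finset.univ_unique, Finset.sum_singleton, zero_smul, add_zero]
      funext j'
      simp only [Finset.sum_apply, Pi.smul_apply, smul_eq_mul, vec]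
      rw [Finset.sum_congr rfl (fun j _ => by rw [mul_ite, mul_one, mul_zero])]
      simp

lemma z0_not_mem_B0 : z0 n ∉ B0 n := by
  intro h
  obtain ⟨j, -, h'⟩ := Finset.mem_image.1 h
  exact absurd h' (by simp [z0])

/-- main combinatorial step: there's a second terminal vertex -/
lemma second_terminal {μ : Fin n → Fin n → ℝ} {lam : Fin n → ℝ} (hn : 0 < n)
    (hrow : ∀ i, ∑ j, μ i j = 1) (hnd : Nondeg μ lam) (hlam : ∀ j, 0 ≤ lam j) :
    ∃ B : Finset (Col n), Vert μ lam B ∧ z0 n ∉ B ∧ B ≠ B0 n := by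
  classical
  set 𝒱 := Finset.univ.filter (Vert μ lam) with h𝒱
  set 𝒯 := 𝒱.filter (fun B => z0 n ∉ B) with h𝒯
  have hhs := handshake μ lam
  have hrhs : ∑ C ∈ Finset.univ.filter (Eset μ lam),
      (C.filter (fun c => Vert μ lam (C.erase c))).card
      = 2 * (Finset.univ.filter (Eset μ lam)).card := by
    rw [Finset.sum_congr rfl (fun C hC => eset_two hn hrow hnd (Finset.mem_filter.1 hC).2),
      Finset.sum_const, smul_eq_mul, mul_comm]
  have hlhs : ∑ B ∈ 𝒱, (ext B).card
      = 2 * (𝒱.filter (fun B => z0 n ∈ B)).card + 𝒯.card := by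
    rw [Finset.sum_congr rfl (fun B hB => ext_card (Finset.mem_filter.1 hB).2)]
    rw [Finset.sum_ite, Finset.sum_const, Finset.sum_const]
    simp only [smul_eq_mul, mul_one, h𝒯]
    ring
  have hparity : 2 ∣ 𝒯.card := by
    have : 2 * (𝒱.filter (fun B => z0 n ∈ B)).card + 𝒯.card
        = 2 * (Finset.univ.filter (Eset μ lam)).card := by
      rw [← hlhs, hhs, hrhs]
    omega
  have hB0 : B0 n ∈ 𝒯 := by
    rw [h𝒯, Finset.mem_filter, h𝒱, Finset.mem_filter]
    exact ⟨⟨Finset.mem_univ _, B0_vert hlam⟩, z0_not_mem_B0⟩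
  have hcard : 1 < 𝒯.card := by
    have h1 : 0 < 𝒯.card := Finset.card_pos.2 ⟨_, hB0⟩
    omega
  obtain ⟨B, hB, hBne⟩ := Finset.exists_mem_ne hcard (B0 n)
  rw [h𝒯, Finset.mem_filter, h𝒱, Finset.mem_filter] at hB
  exact ⟨B, hB.1.2, hB.2, hBne⟩

/-- the nondegenerate core theorem -/
theorem core_nondeg {μ : Fin n → Fin n → ℝ} {lam : Fin n → ℝ} (hn : 0 < n)
    (hrow : ∀ i, ∑ j, μ i j = 1) (hnd : Nondeg μ lam) (hlam : ∀ j, 0 ≤ lam j) :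
    ∃ I : Finset (Fin n), I.Nonempty ∧ ∃ a : Fin n → ℝ, (∀ i, 0 ≤ a i) ∧
      (∀ i, i ∉ I → a i = 0) ∧ (∀ j ∈ I, ∑ i, a i * μ i j = lam j) ∧
      (∀ j, j ∉ I → ∑ i, a i * μ i j ≤ lam j) := by
  classical
  obtain ⟨B, hBvert, hBz, hBne⟩ := second_terminal hn hrow hnd hlam
  obtain ⟨hBcard, hBok, x, hx⟩ := hBvert
  set I := (Finset.univ : Finset (Fin n)).filter (fun i => Sum.inl i ∈ B) with hI
  have hIne : I.Nonempty := by
    rw [Finset.nonempty_iff_ne_empty]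
    intro hIempty
    apply hBne
    have hsub : B0 n ⊆ B := by
      intro c hc
      obtain ⟨j, -, rfl⟩ := Finset.mem_image.1 hc
      rcases terminal_structure hBcard hBok hBz j with h | h
      · exfalso
        have : j ∈ I := by rw [hI]; simp [h]
        rw [hIempty] at this
        exact absurd this (Finset.notMem_empty j)
      · exact h
    refine (Finset.eq_of_subset_of_card_le hsub ?_).symm
    rw [hBcard, B0, Finset.card_image_of_injective _ (fun a b h => by simpa using h),
      Finset.card_univ, Fintype.card_fin]
  -- coordinates of the solution
  have hcoord : ∀ j : Fin n, (∑ i, x (Sum.inl i) * μ i j) + x (Sum.inr (Sum.inl j)) = lam j := by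
    intro j
    have hz0 : x (Sum.inr (Sum.inr ())) = 0 := hx.2.1 _ hBz
    have := congrFun hx.2.2 j
    rw [Fintype.sum_sum_type, Fintype.sum_sum_type] at this
    simp only [Finset.univ_unique, Finset.sum_singleton, Finset.sum_apply, Pi.add_apply,
      Pi.smul_apply, smul_eq_mul, vec, mul_ite, mul_one, mul_zero, hz0, zero_mul,
      add_zero, Finset.sum_ite_eq, Finset.mem_univ, if_true] at this
    exact this
  refine ⟨I, hIne, fun i => x (Sum.inl i), fun i => hx.1 _, ?_, ?_, ?_⟩
  · intro i hiI
    apply hx.2.1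
    intro hmem
    exact hiI (by rw [hI]; simp [hmem])
  · intro j hjI
    have hjB : Sum.inl j ∈ B := by
      rw [hI] at hjI
      simpa using hjI
    have hje : x (Sum.inr (Sum.inl j)) = 0 := by
      apply hx.2.1
      intro hmem
      exact hBok j ⟨hjB, hmem⟩
    have := hcoord j
    rw [hje, add_zero] at this
    exact this
  · intro j hjI
    have := hcoord j
    have h0 := hx.1 (Sum.inr (Sum.inl j))
    linarith


lemma nondeg_exists {μ : Fin n → Fin n → ℝ} (hn : 0 < n) {lam : Fin n → ℝ}
    (hpos : ∀ j, 0 < lam j) {δ : ℝ} (hδ : 0 < δ) :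
    ∃ lam' : Fin n → ℝ, Nondeg μ lam' ∧ (∀ j, 0 ≤ lam' j) ∧ dist lam' lam < δ := by
  classical
  set Bad : Set (Fin n → ℝ) := ⋃ (T : {T : Finset (Col n) // T.card < n}),
    (Submodule.span ℝ (vec μ '' ↑T.1) : Set (Fin n → ℝ)) with hBad
  have hone : ∀ T : {T : Finset (Col n) // T.card < n},
      MeasureTheory.volume ((Submodule.span ℝ (vec μ '' ↑T.1) : Set (Fin n → ℝ))) = 0 := by
    intro T
    apply MeasureTheory.Measure.addHaar_submodule
    intro htop
    have h1 : Module.finrank ℝ (Submodule.span ℝ (vec μ '' ↑T.1)) ≤ T.1.card := by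
      have h2 : vec μ '' ↑T.1 = ↑(T.1.image (vec μ)) := (Finset.coe_image).symm
      rw [h2]
      exact le_trans (finrank_span_finset_le_card _) (Finset.card_image_le)
    rw [htop, finrank_top, Module.finrank_fintype_fun_eq_card, Fintype.card_fin] at h1
    have := T.2
    omega
  have hBad0 : MeasureTheory.volume Bad = 0 := by
    rw [hBad]
    exact MeasureTheory.measure_iUnion_null hone
  have hne : (Finset.univ : Finset (Fin n)).Nonempty := ⟨⟨0, hn⟩, Finset.mem_univ _⟩
  set m := Finset.univ.inf' hne lam with hm
  have hmpos : 0 < m := by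
    obtain ⟨j, -, hj⟩ := Finset.exists_mem_eq_inf' hne lam
    rw [hm, hj]
    exact hpos j
  set r := min δ m with hr
  have hrpos : 0 < r := lt_min hδ hmpos
  have hballpos : 0 < MeasureTheory.volume (Metric.ball lam r) :=
    Metric.measure_ball_pos _ lam hrpos
  have : ¬ (Metric.ball lam r ⊆ Bad) := by
    intro hsub
    have hle : MeasureTheory.volume (Metric.ball lam r) ≤ MeasureTheory.volume Bad :=
      MeasureTheory.measure_mono hsub
    rw [hBad0] at hle
    exact absurd (le_antisymm hle (by positivity)) (ne_of_gt hballpos)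
  obtain ⟨lam', hball, hbad⟩ := Set.not_subset.1 this
  refine ⟨lam', ?_, ?_, ?_⟩
  · intro T hT hmem
    exact hbad (Set.mem_iUnion.2 ⟨⟨T, hT⟩, hmem⟩)
  · intro j
    have h1 : dist (lam' j) (lam j) ≤ dist lam' lam := dist_le_pi_dist lam' lam j
    have h2 : dist lam' lam < m := lt_of_lt_of_le (Metric.mem_ball.1 hball) (min_le_right _ _)
    have h3 : m ≤ lam j := Finset.inf'_le _ (Finset.mem_univ j)
    rw [Real.dist_eq] at h1
    have := abs_lt.1 (lt_of_le_of_lt h1 h2)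
    linarith
  · exact lt_of_lt_of_le (Metric.mem_ball.1 hball) (min_le_left _ _)

def Good (μ : Fin n → Fin n → ℝ) (I : Finset (Fin n)) : Set (Fin n → ℝ) :=
  {v | ∃ a : Fin n → ℝ, (∀ i, 0 ≤ a i) ∧ (∀ i, i ∉ I → a i = 0) ∧
    (∀ j ∈ I, ∑ i, a i * μ i j = v j) ∧ (∀ j, j ∉ I → ∑ i, a i * μ i j ≤ v j)}

lemma good_closed {μ : Fin n → Fin n → ℝ} (hμ0 : ∀ i j, 0 ≤ μ i j)
    (hrow : ∀ i, ∑ j, μ i j = 1) (I : Finset (Fin n)) {v : Fin n → ℝ}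
    (hv : v ∈ closure (Good μ I)) : v ∈ Good μ I := by
  classical
  obtain ⟨w, hw, hwtend⟩ := mem_closure_iff_seq_limit.1 hv
  choose a ha0 hasupp haeq hale using hw
  -- uniform bound on the a's
  have hbound : ∀ (k : ℕ) (i : Fin n), a k i ≤ ∑ j, w k j := by
    intro k i
    have h1 : ∑ i', a k i' = ∑ j, ∑ i', a k i' * μ i' j := by
      rw [Finset.sum_comm]
      apply Finset.sum_congr rfl
      intro i' _
      rw [← Finset.mul_sum, hrow i', mul_one]
    have h2 : ∑ j, ∑ i', a k i' * μ i' j ≤ ∑ j, w k j := by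
      apply Finset.sum_le_sum
      intro j _
      by_cases hj : j ∈ I
      · exact le_of_eq (haeq k j hj)
      · exact hale k j hj
    have h3 : a k i ≤ ∑ i', a k i' :=
      Finset.single_le_sum (fun i' _ => ha0 k i') (Finset.mem_univ i)
    linarith
  have hS : Filter.Tendsto (fun k => ∑ j, w k j) Filter.atTop (nhds (∑ j, v j)) := by
    apply tendsto_finset_sum
    intro j _
    exact (tendsto_pi_nhds.1 hwtend) j
  obtain ⟨M, hM⟩ := hS.bddAbove_range
  have hMk : ∀ k, ∑ j, w k j ≤ M := fun k => hM (Set.mem_range_self k)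
  set M' := max M 0 with hM'
  have habdd : ∀ k, a k ∈ Metric.closedBall (0 : Fin n → ℝ) M' := by
    intro k
    rw [Metric.mem_closedBall, dist_zero_right]
    rw [pi_norm_le_iff_of_nonneg (le_max_right M 0)]
    intro i
    rw [Real.norm_eq_abs, abs_of_nonneg (ha0 k i)]
    exact le_trans (le_trans (hbound k i) (hMk k)) (le_max_left M 0)
  obtain ⟨b, -, φ, hφ, hbtend⟩ :=
    tendsto_subseq_of_bounded Metric.isBounded_closedBall habdd
  have hcoord : ∀ i, Filter.Tendsto (fun k => a (φ k) i) Filter.atTop (nhds (b i)) :=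
    fun i => (tendsto_pi_nhds.1 hbtend) i
  have hwcoord : ∀ j, Filter.Tendsto (fun k => w (φ k) j) Filter.atTop (nhds (v j)) :=
    fun j => ((tendsto_pi_nhds.1 hwtend) j).comp hφ.tendsto_atTop
  have hsumtend : ∀ j, Filter.Tendsto (fun k => ∑ i, a (φ k) i * μ i j)
      Filter.atTop (nhds (∑ i, b i * μ i j)) := by
    intro j
    apply tendsto_finset_sum
    intro i _
    exact (hcoord i).mul_const _
  refine ⟨b, ?_, ?_, ?_, ?_⟩
  · intro i
    exact ge_of_tendsto' (hcoord i) (fun k => ha0 _ i)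
  · intro i hi
    have : Filter.Tendsto (fun k => a (φ k) i) Filter.atTop (nhds 0) := by
      simp only [hasupp _ i hi]
      exact tendsto_const_nhds
    exact tendsto_nhds_unique (hcoord i) this
  · intro j hj
    have h1 : Filter.Tendsto (fun k => ∑ i, a (φ k) i * μ i j) Filter.atTop (nhds (v j)) := by
      simp only [fun k => haeq (φ k) j hj]
      exact hwcoord j
    exact tendsto_nhds_unique (hsumtend j) h1
  · intro j hj
    exact le_of_tendsto_of_tendsto' (hsumtend j) (hwcoord j) (fun k => hale (φ k) j hj)

/-- The core combinatorial theorem -/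
theorem core {μ : Fin n → Fin n → ℝ} {lam : Fin n → ℝ} (hn : 0 < n)
    (hμ0 : ∀ i j, 0 ≤ μ i j) (hrow : ∀ i, ∑ j, μ i j = 1) (hlam : ∀ j, 0 ≤ lam j) :
    ∃ I : Finset (Fin n), I.Nonempty ∧ lam ∈ Good μ I := by
  classical
  by_cases hz : ∃ j, lam j = 0
  · obtain ⟨j, hj⟩ := hz
    refine ⟨{j}, ⟨j, Finset.mem_singleton_self j⟩, 0, fun i => le_refl 0, fun i _ => rfl,
      ?_, ?_⟩
    · intro j' hj'
      rw [Finset.mem_singleton] at hj'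
      subst hj'
      simp [hj]
    · intro j' _
      simpa using hlam j'
  · push_neg at hz
    have hpos : ∀ j, 0 < lam j := fun j => lt_of_le_of_ne (hlam j) (Ne.symm (hz j))
    by_contra hcon
    push_neg at hcon
    -- for each nonempty I, lam is not in the closure of Good μ I
    have hclos : ∀ I : Finset (Fin n), I.Nonempty → lam ∉ closure (Good μ I) := by
      intro I hI hmem
      exact hcon I hI (good_closed hμ0 hrow I hmem)
    have hsep : ∀ I : Finset (Fin n), I.Nonempty →
        ∃ ε > 0, ∀ v ∈ Good μ I, ¬ dist v lam < ε := by
      intro I hI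
      have := hclos I hI
      rw [Metric.mem_closure_iff] at this
      push_neg at this
      obtain ⟨ε, hε, h⟩ := this
      exact ⟨ε, hε, fun v hv hd => absurd (h v hv) (by rw [dist_comm] at hd; simpa using hd)⟩
    choose ε hεpos hεsep using hsep
    set 𝒮 := (Finset.univ : Finset (Finset (Fin n))).filter (fun I => I.Nonempty) with h𝒮
    have h𝒮ne : 𝒮.Nonempty := by
      refine ⟨Finset.univ, ?_⟩
      rw [h𝒮, Finset.mem_filter]
      exact ⟨Finset.mem_univ _, ⟨⟨0, hn⟩, Finset.mem_univ _⟩⟩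
    set δ := 𝒮.inf' h𝒮ne (fun I => if h : I.Nonempty then ε I h else 1) with hδdef
    have hδpos : 0 < δ := by
      rw [hδdef, Finset.lt_inf'_iff]
      intro I hI
      rw [h𝒮, Finset.mem_filter] at hI
      rw [dif_pos hI.2]
      exact hεpos I hI.2
    obtain ⟨lam', hnd, hlam'0, hdist⟩ := nondeg_exists hn hpos hδpos
    obtain ⟨I, hIne, a, ha0, hasupp, haeq, hale⟩ := core_nondeg hn hrow hnd hlam'0
    have hlam'good : lam' ∈ Good μ I := ⟨a, ha0, hasupp, haeq, hale⟩
    have hδle : δ ≤ ε I hIne := by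
      have hI𝒮 : I ∈ 𝒮 := by
        rw [h𝒮, Finset.mem_filter]
        exact ⟨Finset.mem_univ _, hIne⟩
      have := Finset.inf'_le (fun I => if h : I.Nonempty then ε I h else 1) hI𝒮
      rw [dif_pos hIne] at this
      exact this
    exact hεsep I hIne lam' hlam'good (lt_of_lt_of_le hdist hδle)

end Stmt5

open Stmt5 in
/-- Let `x 0, …, x k` be the vertices of a non-degenerate simplex in `ℝᵏ`, and let
`q i` lie on the facet opposite to `x i` for each `i`. If `0` lies in the simplex, then
there is a nonempty subset `I` of the indices such that `0` lies in the convex hull of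
`{q i : i ∈ I} ∪ {x j : j ∉ I}`. -/
theorem stmt5 {k : ℕ} (x q : Fin (k + 1) → EuclideanSpace ℝ (Fin k))
    (hx : AffineIndependent ℝ x)
    (hq : ∀ i, q i ∈ convexHull ℝ (x '' {i}ᶜ))
    (h0 : (0 : EuclideanSpace ℝ (Fin k)) ∈ convexHull ℝ (Set.range x)) :
    ∃ I : Finset (Fin (k + 1)), I.Nonempty ∧
      (0 : EuclideanSpace ℝ (Fin k)) ∈ convexHull ℝ (q '' ↑I ∪ x '' ↑(Iᶜ)) := by
  classical
  have hinj : Function.Injective x := hx.injective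
  -- extract barycentric coordinates of 0
  have h0' : (0 : EuclideanSpace ℝ (Fin k)) ∈
      convexHull ℝ ↑((Finset.univ : Finset (Fin (k + 1))).image x) := by
    rwa [Finset.coe_image, Finset.coe_univ, Set.image_univ]
  rw [Finset.convexHull_eq] at h0'
  obtain ⟨w0, hw0pos, hw0sum, hw0cm⟩ := h0'
  have hlam0 : ∀ j, 0 ≤ w0 (x j) := fun j =>
    hw0pos (x j) (Finset.mem_image_of_mem x (Finset.mem_univ j))
  have hlamsum : ∑ j, w0 (x j) = 1 := by
    rw [← Finset.sum_image (g := x) (f := w0) (s := Finset.univ) (fun a _ b _ h => hinj h)]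
    exact hw0sum
  have hlamrep : ∑ j, w0 (x j) • x j = 0 := by
    have h1 := Finset.centerMass_eq_of_sum_1 _ id hw0sum
    rw [hw0cm] at h1
    rw [Finset.sum_image (g := x) (f := fun y => w0 y • id y) (s := Finset.univ)
      (fun a _ b _ h => hinj h)] at h1
    simpa using h1.symm
  -- extract barycentric coordinates of the q i
  have hqext : ∀ i : Fin (k + 1), ∃ mi : Fin (k + 1) → ℝ, (∀ j, 0 ≤ mi j) ∧
      (∑ j, mi j = 1) ∧ ∑ j, mi j • x j = q i := by
    intro i
    have hset : x '' ({i}ᶜ : Set (Fin (k + 1))) = ↑((Finset.univ.erase i).image x) := by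
      rw [Finset.coe_image, Finset.coe_erase, Finset.coe_univ]
      congr 1
      rw [Set.compl_eq_univ_diff]
    have hqi := hq i
    rw [hset, Finset.convexHull_eq] at hqi
    obtain ⟨wi, hwipos, hwisum, hwicm⟩ := hqi
    refine ⟨fun j => if j = i then 0 else wi (x j), ?_, ?_, ?_⟩
    · intro j
      by_cases hji : j = i
      · simp [hji]
      · simp only [if_neg hji]
        exact hwipos (x j) (Finset.mem_image_of_mem x
          (Finset.mem_erase.2 ⟨hji, Finset.mem_univ j⟩))
    · rw [← Finset.add_sum_erase _ _ (Finset.mem_univ i)]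
      beta_reduce
      rw [if_pos (rfl : i = i), zero_add]
      rw [← hwisum, Finset.sum_image (g := x) (f := wi) (s := Finset.univ.erase i) (fun a ha b hb h => hinj h)]
      apply Finset.sum_congr rfl
      intro j hj
      rw [if_neg (Finset.mem_erase.1 hj).1]
    · have h1 := Finset.centerMass_eq_of_sum_1 _ id hwisum
      rw [hwicm] at h1
      rw [Finset.sum_image (g := x) (f := fun y => wi y • id y)
        (s := Finset.univ.erase i) (fun a ha b hb h => hinj h)] at h1
      rw [← Finset.add_sum_erase _ _ (Finset.mem_univ i)]
      beta_reduce
      rw [if_pos (rfl : i = i), zero_smul, zero_add, h1]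
      apply Finset.sum_congr rfl
      intro j hj
      rw [if_neg (Finset.mem_erase.1 hj).1]
      rfl
  choose m hm0 hmsum hmrep using hqext
  -- apply the core theorem
  obtain ⟨I, hIne, a, ha0, hasupp, haeq, hale⟩ :=
    core (μ := fun i j => m i j) (lam := fun j => w0 (x j)) (Nat.succ_pos k)
      (fun i j => hm0 i j) (fun i => hmsum i) hlam0
  -- assemble the convex combination
  set b : Fin (k + 1) → ℝ := fun j => w0 (x j) - ∑ i, a i * m i j with hb
  set c : Fin (k + 1) → ℝ := fun i => if i ∈ I then a i else b i with hc
  set p : Fin (k + 1) → EuclideanSpace ℝ (Fin k) := fun i => if i ∈ I then q i else x i with hp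
  have hkey : ∀ j, (∑ i, a i * m i j) + (if j ∈ I then 0 else b j) = w0 (x j) := by
    intro j
    by_cases hj : j ∈ I
    · rw [if_pos hj, add_zero]
      exact haeq j hj
    · rw [if_neg hj, hb]
      ring
  have hc0 : ∀ i, 0 ≤ c i := by
    intro i
    simp only [hc]
    by_cases hi : i ∈ I
    · simpa [hi] using ha0 i
    · simp only [if_neg hi, hb]
      have := hale i hi
      simp only [sub_nonneg]
      exact this
  have hcsum : ∑ i, c i = 1 := by
    have h1 : ∑ j, ((∑ i, a i * m i j) + (if j ∈ I then 0 else b j)) = 1 := by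
      rw [Finset.sum_congr rfl (fun j _ => hkey j), hlamsum]
    rw [Finset.sum_add_distrib] at h1
    have h2 : ∑ j, ∑ i, a i * m i j = ∑ i, a i := by
      rw [Finset.sum_comm]
      apply Finset.sum_congr rfl
      intro i _
      rw [← Finset.mul_sum, hmsum i, mul_one]
    rw [h2] at h1
    have h3 : ∑ i, c i = ∑ i, (a i + if i ∈ I then 0 else b i) := by
      apply Finset.sum_congr rfl
      intro i _
      simp only [hc]
      by_cases hi : i ∈ I
      · simp [hi]
      · simp [hi, hasupp i hi]
    rw [h3, Finset.sum_add_distrib, h1]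
  have hcrep : ∑ i, c i • p i = 0 := by
    have h1 : ∀ i, c i • p i
        = (∑ j, (a i * m i j) • x j) + (if i ∈ I then 0 else b i • x i) := by
      intro i
      simp only [hc, hp]
      by_cases hi : i ∈ I
      · simp only [if_pos hi, add_zero]
        rw [← hmrep i, Finset.smul_sum]
        apply Finset.sum_congr rfl
        intro j _
        rw [smul_smul]
      · simp only [if_neg hi, hasupp i hi]
        simp
    rw [Finset.sum_congr rfl (fun i _ => h1 i), Finset.sum_add_distrib]
    have h2 : ∑ i, ∑ j, (a i * m i j) • x j = ∑ j, (∑ i, a i * m i j) • x j := by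
      rw [Finset.sum_comm]
      apply Finset.sum_congr rfl
      intro j _
      rw [Finset.sum_smul]
    have h3 : (∑ i, if i ∈ I then (0 : EuclideanSpace ℝ (Fin k)) else b i • x i)
        = ∑ j, (if j ∈ I then (0:ℝ) else b j) • x j := by
      apply Finset.sum_congr rfl
      intro j _
      by_cases hj : j ∈ I
      · simp [hj]
      · simp [hj]
    rw [h2, h3, ← Finset.sum_add_distrib]
    have h4 : ∀ j, (∑ i, a i * m i j) • x j + (if j ∈ I then (0:ℝ) else b j) • x j
        = w0 (x j) • x j := by
      intro j
      rw [← add_smul, hkey j]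
    rw [Finset.sum_congr rfl (fun j _ => h4 j), hlamrep]
  refine ⟨I, hIne, ?_⟩
  have hmem := Finset.centerMass_mem_convexHull (Finset.univ : Finset (Fin (k + 1)))
    (fun i _ => hc0 i) (by rw [hcsum]; norm_num)
    (s := q '' ↑I ∪ x '' ↑(Iᶜ)) (z := p) ?_
  · rwa [Finset.centerMass_eq_of_sum_1 _ _ hcsum, hcrep] at hmem
  · intro i _
    simp only [hp]
    by_cases hi : i ∈ I
    · rw [if_pos hi]
      exact Set.mem_union_left _ ⟨i, Finset.mem_coe.2 hi, rfl⟩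
    · rw [if_neg hi]
      exact Set.mem_union_right _ ⟨i, Finset.mem_coe.2 (Finset.mem_compl.2 hi), rfl⟩
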